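/- Finite solvability of the Afriat-type quasilinear inequalities is equivalent to cyclical monotonicity: given real numbers a_{ts} for t, s ∈ {1,...,T} (interpreted as a_{ts} = μ^t(x^t) − μ^t(x^s)), there exist real numbers u_1,...,u_T with u_t − u_s ≥ −a_{ts} for all t, s if and only if every cyclic sum a_{k_1 k_2} + a_{k_2 k_3} + ... + a_{k_n k_1} is nonnegative. -/
import Mathlib

noncomputable def bfW {T : ℕ} (a : Fin T → Fin T → ℝ) (b : Fin T) : ℕ → Fin T → ℝ
  | 0 => fun s => a b s
  | n + 1 => fun s =>
      min (bfW a b n s)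
        (Finset.univ.inf' ⟨b, Finset.mem_univ b⟩ (fun t => bfW a b n t + a t s))

lemma bfW_key {T : ℕ} (a : Fin T → Fin T → ℝ) (b : Fin T)
    (hcyc : ∀ (N : ℕ) (k : ℕ → Fin T), 0 < N → k N = k 0 →
      0 ≤ ∑ j ∈ Finset.range N, a (k j) (k (j + 1))) :
    ∀ (n : ℕ) (t : Fin T) (m : ℕ) (j : ℕ → Fin T), j 0 = t → j m = b →
      0 ≤ bfW a b n t + ∑ i ∈ Finset.range m, a (j i) (j (i + 1)) := by
  intro n
  induction n with
  | zero =>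
    intro t m j hj0 hjm
    set k : ℕ → Fin T := fun i => if i = 0 then b else j (i - 1) with hk
    have h := hcyc (m + 1) k (Nat.succ_pos m) (by simp [hk, hjm])
    have hsum : ∑ i ∈ Finset.range (m + 1), a (k i) (k (i + 1))
        = ∑ i ∈ Finset.range m, a (k (i + 1)) (k (i + 2)) + a (k 0) (k 1) :=
      Finset.sum_range_succ' _ m
    have hki : ∀ i, k (i + 1) = j i := by intro i; simp [hk]
    rw [hsum] at h
    simp only [hki] at h
    simp only [hk] at h
    simpa [bfW, hj0, add_comm] using h
  | succ n ih =>
    intro t m j hj0 hjm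
    rw [bfW]
    dsimp only
    rcases le_total (bfW a b n t)
        (Finset.univ.inf' ⟨b, Finset.mem_univ b⟩ (fun r => bfW a b n r + a r t)) with h | h
    · rw [min_eq_left h]; exact ih t m j hj0 hjm
    · rw [min_eq_right h]
      obtain ⟨r, -, hr⟩ := Finset.exists_mem_eq_inf' ⟨b, Finset.mem_univ b⟩
        (fun r => bfW a b n r + a r t)
      rw [hr]
      set j' : ℕ → Fin T := fun i => if i = 0 then r else j (i - 1) with hj'
      have h2 := ih r (m + 1) j' (by simp [hj']) (by simp [hj', hjm])
      have hsum : ∑ i ∈ Finset.range (m + 1), a (j' i) (j' (i + 1))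
          = ∑ i ∈ Finset.range m, a (j' (i + 1)) (j' (i + 2)) + a (j' 0) (j' 1) :=
        Finset.sum_range_succ' _ m
      have hji : ∀ i, j' (i + 1) = j i := by intro i; simp [hj']
      rw [hsum] at h2
      simp only [hji] at h2
      simp only [hj'] at h2
      simp only [if_pos rfl, if_true, hj0] at h2
      linarith

theorem afriat_solvable_iff_nonneg_cycles {T : ℕ} (hT : 0 < T)
    (a : Fin T → Fin T → ℝ) (hdiag : ∀ t, a t t = 0) :
    (∃ u : Fin T → ℝ, ∀ t s : Fin T, u t - u s ≥ -a t s) ↔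
    (∀ (N : ℕ) (k : ℕ → Fin T), 0 < N → k N = k 0 →
      0 ≤ ∑ j ∈ Finset.range N, a (k j) (k (j + 1))) := by
  constructor
  · rintro ⟨u, hu⟩ N k hN hk
    have h1 : ∑ j ∈ Finset.range N, (u (k (j + 1)) - u (k j))
        ≤ ∑ j ∈ Finset.range N, a (k j) (k (j + 1)) := by
      refine Finset.sum_le_sum fun j _ => ?_
      have := hu (k j) (k (j + 1))
      linarith
    have h2 : ∑ j ∈ Finset.range N, (u (k (j + 1)) - u (k j)) = u (k N) - u (k 0) :=
      Finset.sum_range_sub (fun j => u (k j)) N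
    rw [h2, hk, sub_self] at h1
    exact h1
  · intro hcyc
    have b : Fin T := ⟨0, hT⟩
    -- lower bound: bfW a b n s ≥ -a s b
    have hlb : ∀ (n : ℕ) (s : Fin T), -a s b ≤ bfW a b n s := by
      intro n s
      have := bfW_key a b hcyc n s 1 (fun i => if i = 0 then s else b) rfl rfl
      simp only [Finset.sum_range_one, if_pos rfl] at this
      norm_num at this
      linarith
    have hbdd : ∀ s : Fin T, BddBelow (Set.range (fun n => bfW a b n s)) :=
      fun s => ⟨-a s b, by rintro x ⟨n, rfl⟩; exact hlb n s⟩
    refine ⟨fun s => ⨅ n, bfW a b n s, fun t s => ?_⟩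
    -- need : u t - u s ≥ -a t s, i.e. u s ≤ u t + a t s
    have key : ∀ n : ℕ, (⨅ m, bfW a b m s) ≤ bfW a b n t + a t s := by
      intro n
      have h1 : (⨅ m, bfW a b m s) ≤ bfW a b (n + 1) s := ciInf_le (hbdd s) (n + 1)
      have h2 : bfW a b (n + 1) s
          ≤ Finset.univ.inf' ⟨b, Finset.mem_univ b⟩ (fun r => bfW a b n r + a r s) := by
        rw [bfW]; exact min_le_right _ _
      have h3 : Finset.univ.inf' ⟨b, Finset.mem_univ b⟩ (fun r => bfW a b n r + a r s)
          ≤ bfW a b n t + a t s := Finset.inf'_le _ (Finset.mem_univ t)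
      linarith
    have : (⨅ m, bfW a b m s) - a t s ≤ ⨅ n, bfW a b n t :=
      le_ciInf fun n => by linarith [key n]
    linarith
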